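/- Let k be an algebraically closed field of characteristic 2, G = Z/4Z acting faithfully on a curve X over k fixing a point x, with X/G of genus 0 and the action on X \ {x} unramified (an HKG Z/4Z-curve). Then X has genus 1 if and only if the lower ramification groups at x satisfy |G_0| = |G_1| = 4, |G_2| = |G_3| = 2, and G_i = 1 for i ≥ 4. -/

import Mathlib

open PowerSeries

namespace HKGZ4Aux

variable {k : Type*} [Field k]

lemma constCoeff_apply_X (g : PowerSeries k ≃ₐ[k] PowerSeries k) :
    constantCoeff (g X) = 0 := by
  by_contra h
  have hu : IsUnit (g X) :=
    PowerSeries.isUnit_iff_constantCoeff.mpr (isUnit_iff_ne_zero.mpr h)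
  have hX : IsUnit (X : PowerSeries k) := by
    have := hu.map g.symm.toAlgHom
    simpa using this
  rw [PowerSeries.isUnit_iff_constantCoeff, PowerSeries.constantCoeff_X] at hX
  exact hX.ne_zero rfl

lemma dvd_apply (g : PowerSeries k ≃ₐ[k] PowerSeries k) {n : ℕ} {f : PowerSeries k}
    (hf : (X : PowerSeries k) ^ n ∣ f) : (X : PowerSeries k) ^ n ∣ g f := by
  obtain ⟨h, rfl⟩ := hf
  rw [map_mul, map_pow]
  exact dvd_mul_of_dvd_left
    (pow_dvd_pow_of_dvd (PowerSeries.X_dvd_iff.mpr (constCoeff_apply_X g)) n) _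

lemma key_aux (g : PowerSeries k ≃ₐ[k] PowerSeries k) {m : ℕ}
    (hg : (X : PowerSeries k) ^ m ∣ g X - X) :
    ∀ j ≤ m, ∀ f : PowerSeries k, (X : PowerSeries k) ^ j ∣ g f - f := by
  intro j
  induction j with
  | zero => intro _ f; simp
  | succ j ih =>
    intro hj f
    set f₁ : PowerSeries k := mk fun p => coeff (p + 1) f with hf₁
    have hdec : f = X * f₁ + C (constantCoeff f) := eq_X_mul_shift_add_const f
    have h1 : g f - f = (g X - X) * g f₁ + X * (g f₁ - f₁) := by
      conv_lhs => rw [hdec]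
      rw [map_add, map_mul, PowerSeries.C_eq_algebraMap, AlgEquiv.commutes]
      ring
    rw [h1]
    refine dvd_add (dvd_mul_of_dvd_left ((pow_dvd_pow _ hj).trans hg) _) ?_
    have h2 := ih (le_trans (Nat.le_succ j) hj) f₁
    have : (X : PowerSeries k) ^ (j + 1) = X * X ^ j := by ring
    rw [this]
    exact mul_dvd_mul_left _ h2

lemma key (g : PowerSeries k ≃ₐ[k] PowerSeries k) {m : ℕ}
    (hg : (X : PowerSeries k) ^ m ∣ g X - X) (f : PowerSeries k) :
    (X : PowerSeries k) ^ m ∣ g f - f :=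
  key_aux g hg m le_rfl f

lemma X_dvd_sub (g : PowerSeries k ≃ₐ[k] PowerSeries k) :
    (X : PowerSeries k) ∣ g X - X := by
  rw [PowerSeries.X_dvd_iff, map_sub, constCoeff_apply_X, PowerSeries.constantCoeff_X, sub_zero]

lemma constCoeff_apply (g : PowerSeries k ≃ₐ[k] PowerSeries k) (f : PowerSeries k) :
    constantCoeff (g f) = constantCoeff f := by
  have h : (X : PowerSeries k) ^ 1 ∣ g f - f := by
    refine key g ?_ f
    rw [pow_one]; exact X_dvd_sub g
  rw [pow_one, PowerSeries.X_dvd_iff, map_sub] at h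
  exact sub_eq_zero.mp h

lemma coeff_one_comp (g h : PowerSeries k ≃ₐ[k] PowerSeries k) :
    coeff 1 (g (h X)) = coeff 1 (g X) * coeff 1 (h X) := by
  set f₁ : PowerSeries k := mk fun p => coeff (p + 1) (h X) with hf₁
  have hc : constantCoeff f₁ = coeff 1 (h X) := by
    rw [← coeff_zero_eq_constantCoeff_apply, hf₁, coeff_mk]
  have hdec : h X = X * f₁ + C (constantCoeff (h X)) := eq_X_mul_shift_add_const _
  rw [constCoeff_apply_X h, map_zero, add_zero] at hdec
  have h1 : coeff 1 (g (h X)) = coeff 1 (g X) * constantCoeff f₁ := by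
    conv_lhs => rw [hdec]
    rw [map_mul, coeff_one_mul, constCoeff_apply_X g, mul_zero, add_zero, constCoeff_apply g f₁]
  rw [h1, hc]

lemma coeff_one_pow (g : PowerSeries k ≃ₐ[k] PowerSeries k) (n : ℕ) :
    coeff 1 ((g ^ n) X) = coeff 1 (g X) ^ n := by
  induction n with
  | zero => simp
  | succ n ih =>
    rw [pow_succ' g n, AlgEquiv.mul_apply, coeff_one_comp, ih, ← pow_succ']

lemma coeff_one_eq_one [CharP k 2] (g : PowerSeries k ≃ₐ[k] PowerSeries k)
    (hg : g ^ 4 = 1) : coeff 1 (g X) = 1 := by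
  set u : k := coeff 1 (g X) with hu
  have h4 : u ^ 4 = 1 := by
    rw [hu, ← coeff_one_pow g 4, hg]
    simp [PowerSeries.coeff_one_X]
  have h2 : (2 : k) = 0 := by
    have := CharP.cast_eq_zero k 2
    exact_mod_cast this
  have hz : (u - 1) ^ 4 = 0 := by
    linear_combination h4 + (1 - 2 * u ^ 3 + 3 * u ^ 2 - 2 * u) * h2
  have : u - 1 = 0 := pow_eq_zero_iff (n := 4) (by norm_num) |>.mp hz
  exact sub_eq_zero.mp this

end HKGZ4Aux

/-- Let `k` be an algebraically closed field of characteristic 2 and let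
`G ≅ ℤ/4ℤ` act faithfully on a curve `X` over `k` fixing a point `x`, with `X/G` of
genus 0 and the action on `X \ {x}` unramified (an HKG `ℤ/4ℤ`-curve).  Identifying
`G` with a subgroup of `Aut(k[[t]])` via its action on the completed local ring at
`x`, with lower ramification groups `G_i`, the Hurwitz formula (which encodes the
HKG hypotheses) reads `2 g_X - 2 = 4·(-2) + Σ_{i ≥ 0} (|G_i| - 1)`.  Then `X` has
genus 1 if and only if `|G_0| = |G_1| = 4`, `|G_2| = |G_3| = 2`, and `G_i = 1` for
`i ≥ 4`. -/
theorem hkg_z4_curve_genus_one_iff_ramification_filtration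
    (k : Type*) [Field k] [IsAlgClosed k] [CharP k 2]
    (G : Subgroup (PowerSeries k ≃ₐ[k] PowerSeries k))
    (hcard : Nat.card G = 4) (hcyc : IsCyclic G)
    (Ri : ℕ → Set G)
    (hRi : ∀ i, Ri i = {g : G | ∀ f : PowerSeries k,
        (g : PowerSeries k ≃ₐ[k] PowerSeries k) f - f ∈ Ideal.span {X ^ (i + 1)}})
    (N : ℕ) (hN : ∀ i ≥ N, ∀ g ∈ Ri i, g = 1)
    (gX : ℕ)
    (hHurwitz : 2 * (gX : ℤ) - 2 =
        4 * (-2) + ∑ i ∈ Finset.range N, ((Nat.card (Ri i) : ℤ) - 1)) :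
    gX = 1 ↔
      (Nat.card (Ri 0) = 4 ∧ Nat.card (Ri 1) = 4 ∧
        Nat.card (Ri 2) = 2 ∧ Nat.card (Ri 3) = 2 ∧
        ∀ i ≥ 4, ∀ g ∈ Ri i, g = 1) := by
  classical
  have hfinG : Finite G := Nat.finite_of_card_ne_zero (by rw [hcard]; norm_num)
  have hmem : ∀ (i : ℕ) (g : G), g ∈ Ri i ↔
      ∀ f : PowerSeries k, (X : PowerSeries k) ^ (i + 1) ∣
        (g : PowerSeries k ≃ₐ[k] PowerSeries k) f - f := by
    intro i g
    rw [hRi i]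
    simp only [Set.mem_setOf_eq, Ideal.mem_span_singleton]
  have hone : ∀ i, (1 : G) ∈ Ri i := by
    intro i
    rw [hmem]
    intro f
    simp
  have hmono : ∀ i j : ℕ, i ≤ j → Ri j ⊆ Ri i := by
    intro i j hij g hg
    rw [hmem] at hg ⊢
    intro f
    exact (pow_dvd_pow _ (by omega)).trans (hg f)
  have hsub : ∀ i, ∃ H : Subgroup G, (H : Set G) = Ri i := by
    intro i
    refine ⟨{ carrier := Ri i, one_mem' := hone i, mul_mem' := ?_, inv_mem' := ?_ }, rfl⟩
    · intro a b ha hb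
      rw [hmem] at ha hb ⊢
      intro f
      have e : ((a * b : G) : PowerSeries k ≃ₐ[k] PowerSeries k) f - f =
          ((a : PowerSeries k ≃ₐ[k] PowerSeries k)
            ((b : PowerSeries k ≃ₐ[k] PowerSeries k) f)
            - (b : PowerSeries k ≃ₐ[k] PowerSeries k) f)
          + ((b : PowerSeries k ≃ₐ[k] PowerSeries k) f - f) := by
        rw [MulMemClass.coe_mul, AlgEquiv.mul_apply]
        ring
      rw [e]
      exact dvd_add (ha _) (hb f)
    · intro a ha
      rw [hmem] at ha ⊢
      intro f
      have hfix : (a : PowerSeries k ≃ₐ[k] PowerSeries k)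
          (((a⁻¹ : G) : PowerSeries k ≃ₐ[k] PowerSeries k) f) = f := by
        rw [← AlgEquiv.mul_apply, ← MulMemClass.coe_mul, mul_inv_cancel,
          OneMemClass.coe_one, AlgEquiv.one_apply]
      have e : ((a⁻¹ : G) : PowerSeries k ≃ₐ[k] PowerSeries k) f - f =
          -((a : PowerSeries k ≃ₐ[k] PowerSeries k)
              (((a⁻¹ : G) : PowerSeries k ≃ₐ[k] PowerSeries k) f)
            - ((a⁻¹ : G) : PowerSeries k ≃ₐ[k] PowerSeries k) f) := by
        rw [hfix]
        ring
      rw [e]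
      exact dvd_neg.mpr (ha _)
  have hdvd4 : ∀ i, Nat.card (Ri i) ∣ 4 := by
    intro i
    obtain ⟨H, hH⟩ := hsub i
    have hd := Subgroup.card_subgroup_dvd_card H
    rw [hcard] at hd
    rwa [← hH, SetLike.coe_sort_coe]
  have hpos : ∀ i, 1 ≤ Nat.card (Ri i) := by
    intro i
    rw [Nat.card_coe_set_eq]
    exact (Set.ncard_pos (Set.toFinite _)).mpr ⟨1, hone i⟩
  have hcmono : ∀ i j : ℕ, i ≤ j → Nat.card (Ri j) ≤ Nat.card (Ri i) :=
    fun i j h => Nat.card_mono (Set.toFinite _) (hmono i j h)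
  have hsingleton : ∀ i, Nat.card (Ri i) = 1 → ∀ g ∈ Ri i, g = 1 := by
    intro i hi g hg
    rw [Nat.card_coe_set_eq, Set.ncard_eq_one] at hi
    obtain ⟨a, ha⟩ := hi
    have hga : g = a := by rw [ha] at hg; exact hg
    have h1a : (1 : G) = a := by have h := hone i; rw [ha] at h; exact h
    rw [hga, ← h1a]
  have hcard_of_eq_one : ∀ i, (∀ g ∈ Ri i, g = 1) → Nat.card (Ri i) = 1 := by
    intro i h
    have he : Ri i = {1} := Set.eq_singleton_iff_unique_mem.mpr ⟨hone i, h⟩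
    rw [he, Nat.card_coe_set_eq, Set.ncard_singleton]
  have hmemRi1 : ∀ g : G, g ∈ Ri 1 := by
    intro g
    have hg4 : g ^ 4 = 1 := by rw [← hcard]; exact pow_card_eq_one'
    have he4 : (g : PowerSeries k ≃ₐ[k] PowerSeries k) ^ 4 = 1 := by
      rw [← SubmonoidClass.coe_pow, hg4, OneMemClass.coe_one]
    have hu : coeff 1 ((g : PowerSeries k ≃ₐ[k] PowerSeries k) X) = 1 :=
      HKGZ4Aux.coeff_one_eq_one _ he4
    have hdvd2 : (X : PowerSeries k) ^ 2 ∣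
        (g : PowerSeries k ≃ₐ[k] PowerSeries k) X - X := by
      rw [PowerSeries.X_pow_dvd_iff]
      intro m hm
      interval_cases m
      · rw [map_sub]
        simp [PowerSeries.coeff_zero_eq_constantCoeff, HKGZ4Aux.constCoeff_apply_X]
      · rw [map_sub]
        simp [hu, PowerSeries.coeff_one_X]
    rw [hmem]
    intro f
    exact HKGZ4Aux.key _ hdvd2 f
  have hc1 : Nat.card (Ri 1) = 4 := by
    rw [Set.eq_univ_of_forall hmemRi1, Nat.card_univ, hcard]
  have hc0 : Nat.card (Ri 0) = 4 := by
    have hle : Nat.card (Ri 0) ≤ 4 := by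
      have := Nat.card_mono (Set.toFinite _) (Set.subset_univ (Ri 0))
      rwa [Nat.card_univ, hcard] at this
    have := hcmono 0 1 (by omega)
    omega
  have hterm : ∀ i, (0 : ℤ) ≤ (Nat.card (Ri i) : ℤ) - 1 := by
    intro i
    have := hpos i
    omega
  constructor
  · intro hg
    rw [hg] at hHurwitz
    have hsum : ∑ i ∈ Finset.range N, ((Nat.card (Ri i) : ℤ) - 1) = 8 := by
      push_cast at hHurwitz
      linarith
    have hN2 : 2 ≤ N := by
      by_contra hlt
      push_neg at hlt
      have hnt : Nontrivial G := Finite.one_lt_card_iff_nontrivial.mp (by omega)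
      obtain ⟨a, ha⟩ := exists_ne (1 : G)
      exact ha (hN 1 (by omega) a (hmemRi1 a))
    have hsplit := Finset.sum_Ico_consecutive
      (fun i => ((Nat.card (Ri i) : ℤ) - 1)) (Nat.zero_le 2) hN2
    rw [← Finset.range_eq_Ico, ← Finset.range_eq_Ico] at hsplit
    have h2v : ∑ i ∈ Finset.range 2, ((Nat.card (Ri i) : ℤ) - 1) = 6 := by
      rw [Finset.sum_range_succ, Finset.sum_range_succ, Finset.sum_range_zero, hc0, hc1]
      norm_num
    have hsplit2 : ∑ i ∈ Finset.Ico 2 N, ((Nat.card (Ri i) : ℤ) - 1) = 2 := by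
      have := hsplit
      rw [h2v, hsum] at this
      linarith
    have hN3 : 3 ≤ N := by
      by_contra hlt
      push_neg at hlt
      rw [Finset.Ico_eq_empty (by omega), Finset.sum_empty] at hsplit2
      norm_num at hsplit2
    have hc2 : Nat.card (Ri 2) = 2 := by
      have hd := hdvd4 2
      have hp := hpos 2
      have hle4 : Nat.card (Ri 2) ≤ 4 := by have := hcmono 1 2 (by omega); omega
      have hne3 : Nat.card (Ri 2) ≠ 3 := by intro h; rw [h] at hd; norm_num at hd
      have hne4 : Nat.card (Ri 2) ≠ 4 := by
        intro h
        have hle : ((Nat.card (Ri 2) : ℤ) - 1) ≤ 2 := by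
          rw [← hsplit2]
          exact Finset.single_le_sum (fun j _ => hterm j)
            (Finset.mem_Ico.mpr ⟨le_rfl, by omega⟩)
        rw [h] at hle
        norm_num at hle
      have hne1 : Nat.card (Ri 2) ≠ 1 := by
        intro h
        have hz : ∀ i ∈ Finset.Ico 2 N, ((Nat.card (Ri i) : ℤ) - 1) = 0 := by
          intro i hi
          have hi2 := (Finset.mem_Ico.mp hi).1
          have hle1 : Nat.card (Ri i) ≤ 1 := h ▸ hcmono 2 i hi2
          have := hpos i
          omega
        rw [Finset.sum_eq_zero hz] at hsplit2
        norm_num at hsplit2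
      omega
    rw [Finset.sum_eq_sum_Ico_succ_bot (show 2 < N by omega)] at hsplit2
    rw [hc2] at hsplit2
    have hT3 : ∑ i ∈ Finset.Ico 3 N, ((Nat.card (Ri i) : ℤ) - 1) = 1 := by
      push_cast at hsplit2
      linarith
    have hN4 : 4 ≤ N := by
      by_contra hlt
      push_neg at hlt
      rw [Finset.Ico_eq_empty (by omega), Finset.sum_empty] at hT3
      norm_num at hT3
    have hc3 : Nat.card (Ri 3) = 2 := by
      have hle2 : Nat.card (Ri 3) ≤ 2 := by have := hcmono 2 3 (by omega); omega
      have hne1 : Nat.card (Ri 3) ≠ 1 := by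
        intro h
        have hz : ∀ i ∈ Finset.Ico 3 N, ((Nat.card (Ri i) : ℤ) - 1) = 0 := by
          intro i hi
          have hi3 := (Finset.mem_Ico.mp hi).1
          have hle1 : Nat.card (Ri i) ≤ 1 := h ▸ hcmono 3 i hi3
          have := hpos i
          omega
        rw [Finset.sum_eq_zero hz] at hT3
        norm_num at hT3
      have := hpos 3
      omega
    rw [Finset.sum_eq_sum_Ico_succ_bot (show 3 < N by omega)] at hT3
    rw [hc3] at hT3
    have hT4 : ∑ i ∈ Finset.Ico 4 N, ((Nat.card (Ri i) : ℤ) - 1) = 0 := by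
      push_cast at hT3
      linarith
    refine ⟨hc0, hc1, hc2, hc3, ?_⟩
    intro i hi g hgmem
    by_cases hiN : N ≤ i
    · exact hN i hiN g hgmem
    · push_neg at hiN
      have hle : ((Nat.card (Ri i) : ℤ) - 1) ≤ 0 := by
        rw [← hT4]
        exact Finset.single_le_sum (fun j _ => hterm j)
          (Finset.mem_Ico.mpr ⟨hi, hiN⟩)
      have hci : Nat.card (Ri i) = 1 := by
        have := hpos i
        omega
      exact hsingleton i hci g hgmem
  · rintro ⟨h0, h1, h2, h3, h4⟩
    have hN4 : 4 ≤ N := by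
      by_contra hlt
      push_neg at hlt
      have := hcard_of_eq_one 3 (hN 3 (by omega))
      omega
    have hs4 : ∑ i ∈ Finset.range 4, ((Nat.card (Ri i) : ℤ) - 1) = 8 := by
      rw [Finset.sum_range_succ, Finset.sum_range_succ, Finset.sum_range_succ,
        Finset.sum_range_succ, Finset.sum_range_zero, h0, h1, h2, h3]
      norm_num
    have htail0 : ∑ i ∈ Finset.Ico 4 N, ((Nat.card (Ri i) : ℤ) - 1) = 0 := by
      refine Finset.sum_eq_zero ?_
      intro i hi
      have := hcard_of_eq_one i (h4 i (Finset.mem_Ico.mp hi).1)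
      rw [this]
      norm_num
    have hsum : ∑ i ∈ Finset.range N, ((Nat.card (Ri i) : ℤ) - 1) = 8 := by
      rw [Finset.range_eq_Ico, ← Finset.sum_Ico_consecutive
        (fun i => ((Nat.card (Ri i) : ℤ) - 1)) (Nat.zero_le 4) hN4,
        ← Finset.range_eq_Ico, hs4, htail0]
      norm_num
    rw [hsum] at hHurwitz
    omega
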